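/- Let f : [a,b] → ℝ be (l,L)-Lipschitzian, and let a = x₀ < x₁ < ⋯ < xₙ = b be a partition with hᵢ = x_{i+1} - xᵢ and points ξᵢ ∈ [xᵢ, x_{i+1}]. Then |∫ₐᵇ f(t)dt - [(1/2)∑ᵢ f(ξᵢ)hᵢ + (1/2)∑ᵢ ((f(xᵢ)+f(x_{i+1}))/2)hᵢ - ((L+l)/4)∑ᵢ(ξᵢ - (xᵢ+x_{i+1})/2)hᵢ]| ≤ ∑ᵢ (1/2)[hᵢ²/8 + (ξᵢ - (xᵢ+x_{i+1})/2)²](L - l). -/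

import Mathlib

open MeasureTheory intervalIntegral

lemma aux_base : ∀ y : ℝ, HasDerivAt (fun s : ℝ => s * |s| / 2) (|y|) y := by
  intro y
  rcases lt_trichotomy y 0 with hy | hy | hy
  · have heq : (fun s : ℝ => s * |s| / 2) =ᶠ[nhds y] fun s => -(s * s) / 2 := by
      filter_upwards [Iio_mem_nhds hy] with s hs
      rw [abs_of_neg hs]; ring
    have h2 : HasDerivAt (fun s : ℝ => -(s * s) / 2) (|y|) y := by
      have h := ((hasDerivAt_id y).mul (hasDerivAt_id y)).neg.div_const 2
      have : |y| = -(1 * id y + id y * 1) / 2 := by simp [abs_of_neg hy]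
      rw [this]; exact h
    exact h2.congr_of_eventuallyEq heq
  · subst hy
    rw [hasDerivAt_iff_tendsto_slope]
    have heq : slope (fun s : ℝ => s * |s| / 2) 0 =ᶠ[nhdsWithin 0 {(0:ℝ)}ᶜ] fun s => |s| / 2 := by
      filter_upwards [self_mem_nhdsWithin] with s hs
      have hs' : s ≠ 0 := hs
      rw [slope_def_field]; field_simp; ring
    rw [Filter.tendsto_congr' heq]
    have : Filter.Tendsto (fun s : ℝ => |s| / 2) (nhds 0) (nhds (|(0:ℝ)| / 2)) := by
      exact (continuous_abs.div_const 2).tendsto 0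
    simpa using this.mono_left nhdsWithin_le_nhds
  · have heq : (fun s : ℝ => s * |s| / 2) =ᶠ[nhds y] fun s => s * s / 2 := by
      filter_upwards [Ioi_mem_nhds hy] with s hs
      rw [abs_of_pos hs]
    have h2 : HasDerivAt (fun s : ℝ => (s * s) / 2) (|y|) y := by
      have h := ((hasDerivAt_id y).mul (hasDerivAt_id y)).div_const 2
      have : |y| = (1 * id y + id y * 1) / 2 := by simp [abs_of_pos hy]
      rw [this]; exact h
    exact h2.congr_of_eventuallyEq heq

lemma aux_hasDeriv (c : ℝ) : ∀ t : ℝ, HasDerivAt (fun s => (s - c) * |s - c| / 2) (|t - c|) t := by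
  intro t
  have := (aux_base (t - c)).comp t ((hasDerivAt_id t).sub_const c)
  simpa [Function.comp_def] using this

lemma aux_int_abs (c α β : ℝ) :
    ∫ t in α..β, |t - c| = (β - c) * |β - c| / 2 - (α - c) * |α - c| / 2 := by
  exact intervalIntegral.integral_eq_sub_of_hasDerivAt (fun t _ => aux_hasDeriv c t)
    ((continuous_abs.comp (continuous_id.sub continuous_const)).intervalIntegrable α β)

lemma aux_int_lin (u α : ℝ) : ∫ t in u..α, (t - u) = (α - u)^2/2 := by
  have h := intervalIntegral.integral_comp_sub_right (a := u) (b := α) (fun s => s) u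
  rw [h, integral_id]; ring

lemma aux_int_lin' (β v : ℝ) : ∫ t in β..v, (v - t) = (v - β)^2/2 := by
  have h := intervalIntegral.integral_comp_sub_left (a := β) (b := v) (fun s => s) v
  rw [h, integral_id]; ring


lemma aux_key (K u v c : ℝ) (hK : 0 ≤ K) (huv : u ≤ v) (hc : c ∈ Set.Icc u v)
    (g : ℝ → ℝ) (hg : IntervalIntegrable g MeasureTheory.volume u v)
    (hL : ∀ x₁ x₂, u ≤ x₁ → x₁ ≤ x₂ → x₂ ≤ v → |g x₂ - g x₁| ≤ K * (x₂ - x₁)) :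
    |(∫ t in u..v, g t) - ((v-u)/2 * g c + (v-u)/4 * (g u + g v))| ≤
      K * ((v-u)^2/8 + (c-(u+v)/2)^2) := by
  obtain ⟨hc1, hc2⟩ := hc
  set α := u + (v - u)/4 with hα
  set β := v - (v - u)/4 with hβ
  have huα : u ≤ α := by rw [hα]; linarith
  have hαβ : α ≤ β := by rw [hα, hβ]; linarith
  have hβv : β ≤ v := by rw [hβ]; linarith
  clear_value α β
  have sub1 : Set.uIcc u α ⊆ Set.uIcc u v := Set.uIcc_subset_uIcc (by simp)
    (by rw [Set.uIcc_of_le huv]; exact ⟨huα, le_trans hαβ hβv⟩)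
  have sub2 : Set.uIcc α β ⊆ Set.uIcc u v := Set.uIcc_subset_uIcc
    (by rw [Set.uIcc_of_le huv]; exact ⟨huα, le_trans hαβ hβv⟩)
    (by rw [Set.uIcc_of_le huv]; exact ⟨le_trans huα hαβ, hβv⟩)
  have sub3 : Set.uIcc β v ⊆ Set.uIcc u v := Set.uIcc_subset_uIcc
    (by rw [Set.uIcc_of_le huv]; exact ⟨le_trans huα hαβ, hβv⟩) (by simp)
  have hg1 := hg.mono_set sub1
  have hg2 := hg.mono_set sub2
  have hg3 := hg.mono_set sub3
  have hsplit : (∫ t in u..v, g t) =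
      (∫ t in u..α, g t) + (∫ t in α..β, g t) + (∫ t in β..v, g t) := by
    rw [integral_add_adjacent_intervals hg1 hg2,
        integral_add_adjacent_intervals (hg1.trans hg2) hg3]
  have e1 : (∫ t in u..α, (g t - g u)) = (∫ t in u..α, g t) - (α - u) * g u := by
    rw [intervalIntegral.integral_sub hg1 intervalIntegrable_const,
      intervalIntegral.integral_const, smul_eq_mul]
  have e2 : (∫ t in α..β, (g t - g c)) = (∫ t in α..β, g t) - (β - α) * g c := by
    rw [intervalIntegral.integral_sub hg2 intervalIntegrable_const,
      intervalIntegral.integral_const, smul_eq_mul]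
  have e3 : (∫ t in β..v, (g t - g v)) = (∫ t in β..v, g t) - (v - β) * g v := by
    rw [intervalIntegral.integral_sub hg3 intervalIntegrable_const,
      intervalIntegral.integral_const, smul_eq_mul]
  have key : (∫ t in u..v, g t) - ((v-u)/2 * g c + (v-u)/4 * (g u + g v)) =
      (∫ t in u..α, (g t - g u)) + (∫ t in α..β, (g t - g c)) + (∫ t in β..v, (g t - g v)) := by
    rw [e1, e2, e3, hsplit, hα, hβ]; ring
  rw [key]
  have b1 : |∫ t in u..α, (g t - g u)| ≤ K * (α - u)^2/2 := by
    calc |∫ t in u..α, (g t - g u)| ≤ ∫ t in u..α, |g t - g u| :=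
          intervalIntegral.abs_integral_le_integral_abs huα
    _ ≤ ∫ t in u..α, K * (t - u) := by
        apply intervalIntegral.integral_mono_on huα
          ((hg1.sub intervalIntegrable_const).abs)
          ((by fun_prop : Continuous fun t : ℝ => K * (t - u)).intervalIntegrable u α)
        intro t ht
        exact hL u t le_rfl ht.1 (by linarith [ht.2])
    _ = K * (α - u)^2/2 := by
        rw [intervalIntegral.integral_const_mul, aux_int_lin]; ring
  have b3 : |∫ t in β..v, (g t - g v)| ≤ K * (v - β)^2/2 := by
    calc |∫ t in β..v, (g t - g v)| ≤ ∫ t in β..v, |g t - g v| :=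
          intervalIntegral.abs_integral_le_integral_abs hβv
    _ ≤ ∫ t in β..v, K * (v - t) := by
        apply intervalIntegral.integral_mono_on hβv
          ((hg3.sub intervalIntegrable_const).abs)
          ((by fun_prop : Continuous fun t : ℝ => K * (v - t)).intervalIntegrable β v)
        intro t ht
        rw [abs_sub_comm]
        exact hL t v (by linarith [ht.1]) ht.2 le_rfl
    _ = K * (v - β)^2/2 := by
        rw [intervalIntegral.integral_const_mul, aux_int_lin']; ring
  have b2 : |∫ t in α..β, (g t - g c)| ≤ K * ((β - c) * |β - c| / 2 - (α - c) * |α - c| / 2) := by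
    calc |∫ t in α..β, (g t - g c)| ≤ ∫ t in α..β, |g t - g c| :=
          intervalIntegral.abs_integral_le_integral_abs hαβ
    _ ≤ ∫ t in α..β, K * |t - c| := by
        apply intervalIntegral.integral_mono_on hαβ
          ((hg2.sub intervalIntegrable_const).abs)
          ((by fun_prop : Continuous fun t : ℝ => K * |t - c|).intervalIntegrable α β)
        intro t ht
        rcases le_total t c with h | h
        · calc |g t - g c| = |g c - g t| := abs_sub_comm _ _
          _ ≤ K * (c - t) := hL t c (by linarith [ht.1]) h hc2
          _ = K * |t - c| := by rw [abs_sub_comm, abs_of_nonneg (by linarith : (0:ℝ) ≤ c - t)]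
        · calc |g t - g c| ≤ K * (t - c) := hL c t hc1 h (by linarith [ht.2])
          _ = K * |t - c| := by rw [abs_of_nonneg (by linarith : (0:ℝ) ≤ t - c)]
    _ = K * ((β - c) * |β - c| / 2 - (α - c) * |α - c| / 2) := by
        rw [intervalIntegral.integral_const_mul, aux_int_abs]
  have habs1 : (β - c) * |β - c| ≤ (β - c)^2 := by
    calc (β - c) * |β - c| ≤ |β - c| * |β - c| :=
          mul_le_mul_of_nonneg_right (le_abs_self _) (abs_nonneg _)
    _ = (β - c)^2 := by rw [abs_mul_abs_self]; ring
  have habs2 : -((α - c) * |α - c|) ≤ (α - c)^2 := by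
    calc -((α - c) * |α - c|) = (-(α - c)) * |α - c| := by ring
    _ ≤ |α - c| * |α - c| := mul_le_mul_of_nonneg_right (neg_le_abs _) (abs_nonneg _)
    _ = (α - c)^2 := by rw [abs_mul_abs_self]; ring
  have hstep : (β - c) * |β - c| / 2 - (α - c) * |α - c| / 2 ≤ ((β-c)^2 + (α-c)^2)/2 := by
    nlinarith [habs1, habs2]
  have h3 := mul_le_mul_of_nonneg_left hstep hK
  have e : K * ((α - u)^2/2) + K * (((β-c)^2 + (α-c)^2)/2) + K * ((v - β)^2/2)
      = K * ((v-u)^2/8 + (c-(u+v)/2)^2) := by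
    rw [hα, hβ]; ring
  calc |(∫ t in u..α, (g t - g u)) + (∫ t in α..β, (g t - g c)) + (∫ t in β..v, (g t - g v))|
      ≤ |∫ t in u..α, (g t - g u)| + |∫ t in α..β, (g t - g c)| + |∫ t in β..v, (g t - g v)| :=
        (abs_add_le _ _).trans (by gcongr; exact abs_add_le _ _)
  _ ≤ K * ((v-u)^2/8 + (c-(u+v)/2)^2) := by linarith


theorem stmt_14 (a b l L : ℝ) (f : ℝ → ℝ) (hab : a < b) (hlL : l < L)
    (hf : ∀ x₁ x₂, a ≤ x₁ → x₁ ≤ x₂ → x₂ ≤ b →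
      l * (x₂ - x₁) ≤ f x₂ - f x₁ ∧ f x₂ - f x₁ ≤ L * (x₂ - x₁))
    (hint : IntervalIntegrable f MeasureTheory.volume a b)
    (n : ℕ) (hn : 0 < n) (x : ℕ → ℝ) (ξ : ℕ → ℝ)
    (hx0 : x 0 = a) (hxn : x n = b)
    (hmono : ∀ i < n, x i < x (i + 1))
    (hξ : ∀ i < n, ξ i ∈ Set.Icc (x i) (x (i + 1))) :
    |(∫ t in a..b, f t) -
        (1 / 2 * ∑ i ∈ Finset.range n, f (ξ i) * (x (i + 1) - x i)
          + 1 / 2 * ∑ i ∈ Finset.range n, (f (x i) + f (x (i + 1))) / 2 * (x (i + 1) - x i)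
          - (L + l) / 4 * ∑ i ∈ Finset.range n,
              (ξ i - (x i + x (i + 1)) / 2) * (x (i + 1) - x i))| ≤
      ∑ i ∈ Finset.range n,
        1 / 2 * ((x (i + 1) - x i) ^ 2 / 8 + (ξ i - (x i + x (i + 1)) / 2) ^ 2) * (L - l) := by
  set K := (L - l)/2 with hKdef
  set c := (L + l)/2 with hcdef
  set g : ℝ → ℝ := fun t => f t - c * t with hgdef
  have hK : 0 ≤ K := by rw [hKdef]; linarith
  -- monotonicity
  have hmono' : ∀ j, j ≤ n → ∀ i, i ≤ j → x i ≤ x j := by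
    intro j hj
    induction j with
    | zero => intro i hi; rw [Nat.le_zero.mp hi]
    | succ k ih =>
      intro i hi
      rcases Nat.lt_succ_iff_lt_or_eq.mp (Nat.lt_succ_of_le hi) with h | h
      · exact le_trans (ih (by omega) i (by omega)) (le_of_lt (hmono k (by omega)))
      · rw [h]
  have hax : ∀ i, i ≤ n → a ≤ x i := fun i hi => hx0 ▸ hmono' i hi 0 (Nat.zero_le i)
  have hxb : ∀ i, i ≤ n → x i ≤ b := fun i hi => hxn ▸ hmono' n le_rfl i hi
  -- integrability on subintervals
  have hfi : ∀ i < n, IntervalIntegrable f MeasureTheory.volume (x i) (x (i+1)) := by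
    intro i hi
    apply hint.mono_set
    apply Set.uIcc_subset_uIcc <;> rw [Set.uIcc_of_le (le_of_lt hab)]
    · exact ⟨hax i (by omega), hxb i (by omega)⟩
    · exact ⟨hax (i+1) (by omega), hxb (i+1) (by omega)⟩
  have hgi : ∀ i < n, IntervalIntegrable g MeasureTheory.volume (x i) (x (i+1)) := by
    intro i hi
    exact (hfi i hi).sub ((by fun_prop : Continuous fun t : ℝ => c * t).intervalIntegrable _ _)
  -- Lipschitz bound for g
  have hLip : ∀ x₁ x₂, a ≤ x₁ → x₁ ≤ x₂ → x₂ ≤ b → |g x₂ - g x₁| ≤ K * (x₂ - x₁) := by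
    intro x₁ x₂ h1 h2 h3
    obtain ⟨hl', hL'⟩ := hf x₁ x₂ h1 h2 h3
    rw [abs_le]
    constructor <;> simp only [hgdef, hKdef, hcdef] <;> nlinarith
  -- split the integral
  have hsum : (∫ t in a..b, f t) = ∑ i ∈ Finset.range n, ∫ t in x i..x (i+1), f t := by
    rw [← hx0, ← hxn]
    exact (intervalIntegral.sum_integral_adjacent_intervals (fun i hi => hfi i hi)).symm
  -- error as a sum
  have hE : (∫ t in a..b, f t) -
      (1 / 2 * ∑ i ∈ Finset.range n, f (ξ i) * (x (i + 1) - x i)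
        + 1 / 2 * ∑ i ∈ Finset.range n, (f (x i) + f (x (i + 1))) / 2 * (x (i + 1) - x i)
        - (L + l) / 4 * ∑ i ∈ Finset.range n,
            (ξ i - (x i + x (i + 1)) / 2) * (x (i + 1) - x i)) =
      ∑ i ∈ Finset.range n, ((∫ t in x i..x (i+1), g t) -
        ((x (i+1) - x i)/2 * g (ξ i) + (x (i+1) - x i)/4 * (g (x i) + g (x (i+1))))) := by
    rw [hsum, Finset.mul_sum, Finset.mul_sum, Finset.mul_sum,
      ← Finset.sum_add_distrib, ← Finset.sum_sub_distrib, ← Finset.sum_sub_distrib]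
    apply Finset.sum_congr rfl
    intro i hi
    have hi' := Finset.mem_range.mp hi
    have hint_t : (∫ t in x i..x (i+1), f t) = (∫ t in x i..x (i+1), g t)
        + c * ((x (i+1))^2 - (x i)^2)/2 := by
      have hsub : (∫ t in x i..x (i+1), (f t - g t)) = c * ((x (i+1))^2 - (x i)^2)/2 := by
        have : (fun t => f t - g t) = fun t => c * t := by
          ext t; simp [hgdef]
        rw [this, intervalIntegral.integral_const_mul, integral_id]
        ring
      rw [intervalIntegral.integral_sub (hfi i hi') (hgi i hi')] at hsub
      linarith
    rw [hint_t]
    simp only [hgdef, hcdef]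
    ring
  rw [hE]
  calc |∑ i ∈ Finset.range n, ((∫ t in x i..x (i+1), g t) -
        ((x (i+1) - x i)/2 * g (ξ i) + (x (i+1) - x i)/4 * (g (x i) + g (x (i+1)))))|
      ≤ ∑ i ∈ Finset.range n, |(∫ t in x i..x (i+1), g t) -
        ((x (i+1) - x i)/2 * g (ξ i) + (x (i+1) - x i)/4 * (g (x i) + g (x (i+1))))| :=
        Finset.abs_sum_le_sum_abs _ _
  _ ≤ ∑ i ∈ Finset.range n,
        1 / 2 * ((x (i + 1) - x i) ^ 2 / 8 + (ξ i - (x i + x (i + 1)) / 2) ^ 2) * (L - l) := by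
      apply Finset.sum_le_sum
      intro i hi
      have hi' := Finset.mem_range.mp hi
      have hb := aux_key K (x i) (x (i+1)) (ξ i) hK (le_of_lt (hmono i hi')) (hξ i hi') g
        (hgi i hi')
        (fun x₁ x₂ h1 h2 h3 => hLip x₁ x₂ (le_trans (hax i (by omega)) h1) h2
          (le_trans h3 (hxb (i+1) (by omega))))
      calc _ ≤ K * ((x (i+1) - x i)^2/8 + (ξ i - (x i + x (i+1))/2)^2) := hb
      _ = 1 / 2 * ((x (i + 1) - x i) ^ 2 / 8 + (ξ i - (x i + x (i + 1)) / 2) ^ 2) * (L - l) := by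
          rw [hKdef]; ring
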